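/- Let D' = {(x,t_2,t_3) ∈ ℝ³ : 3t_3 + 2x³ + 6xt_2 ≠ 0} and define on D' the rational functions u_1 = 6(t_2 + x²)/(3t_3 + 2x³ + 6xt_2) and u_2 = 3(6xt_3 − 5x⁴ − 6x²t_2 − 9t_2²)/(3t_3 + 2x³ + 6xt_2)². Then (u_1,u_2) satisfies on D' the Antonowicz–Fordy two-component cKdV flow: ∂u_1/∂t_2 = ∂_x u_2 + (3/2)u_1 ∂_x u_1 and ∂u_2/∂t_2 = u_2 ∂_x u_1 + (1/2)u_1 ∂_x u_2 + (1/4)∂_x³ u_1. -/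

import Mathlib

/-- `u₁ = 6(t₂ + x²)/(3t₃ + 2x³ + 6xt₂)`. -/
noncomputable def u1sol (x t2 t3 : ℝ) : ℝ :=
  6 * (t2 + x ^ 2) / (3 * t3 + 2 * x ^ 3 + 6 * x * t2)

/-- `u₂ = 3(6xt₃ − 5x⁴ − 6x²t₂ − 9t₂²)/(3t₃ + 2x³ + 6xt₂)²`. -/
noncomputable def u2sol (x t2 t3 : ℝ) : ℝ :=
  3 * (6 * x * t3 - 5 * x ^ 4 - 6 * x ^ 2 * t2 - 9 * t2 ^ 2)
    / (3 * t3 + 2 * x ^ 3 + 6 * x * t2) ^ 2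

/-- Generic degree-8 polynomial derivative. -/
lemma hasDerivAt_poly8 (a b c d e f g h i y : ℝ) :
    HasDerivAt (fun y : ℝ => a + b*y^1 + c*y^2 + d*y^3 + e*y^4 + f*y^5 + g*y^6 + h*y^7 + i*y^8)
      (b + 2*c*y^1 + 3*d*y^2 + 4*e*y^3 + 5*f*y^4 + 6*g*y^5 + 7*h*y^6 + 8*i*y^7) y := by
  have H :=
    (((((((((hasDerivAt_const y a).add ((hasDerivAt_pow 1 y).const_mul b)).add
      ((hasDerivAt_pow 2 y).const_mul c)).add ((hasDerivAt_pow 3 y).const_mul d)).add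
      ((hasDerivAt_pow 4 y).const_mul e)).add ((hasDerivAt_pow 5 y).const_mul f)).add
      ((hasDerivAt_pow 6 y).const_mul g)).add ((hasDerivAt_pow 7 y).const_mul h)).add
      ((hasDerivAt_pow 8 y).const_mul i))
  refine H.congr_deriv (Eq.symm ?_)
  push_cast
  ring

/-- `∂u₁/∂x`. -/
noncomputable def g1fun (t2 t3 y : ℝ) : ℝ :=
  (-36*t2^2 + 36*y*t3 - 12*y^4) / (3*t3 + 2*y^3 + 6*y*t2)^2

/-- `∂²u₁/∂x²`. -/
noncomputable def g2fun (t2 t3 y : ℝ) : ℝ :=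
  (108*t3^2 + 432*t2^3 - 216*y*t2*t3 + 432*y^2*t2^2 - 504*y^3*t3 - 144*y^4*t2 + 48*y^6)
    / (3*t3 + 2*y^3 + 6*y*t2)^3

lemma step_u1x (t2 t3 y : ℝ) (hy : 3*t3 + 2*y^3 + 6*y*t2 ≠ 0) :
    HasDerivAt (fun z => u1sol z t2 t3) (g1fun t2 t3 y) y := by
  have e : (fun z => u1sol z t2 t3)
      = fun z : ℝ => ((6*t2) + 0*z^1 + 6*z^2 + 0*z^3 + 0*z^4 + 0*z^5 + 0*z^6 + 0*z^7 + 0*z^8)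
        / ((3*t3) + (6*t2)*z^1 + 0*z^2 + 2*z^3 + 0*z^4 + 0*z^5 + 0*z^6 + 0*z^7 + 0*z^8) := by
    funext z; unfold u1sol; ring
  have hy' : ((3*t3) + (6*t2)*y^1 + 0*y^2 + 2*y^3 + 0*y^4 + 0*y^5 + 0*y^6 + 0*y^7 + 0*y^8 : ℝ) ≠ 0 := by
    have : ((3*t3) + (6*t2)*y^1 + 0*y^2 + 2*y^3 + 0*y^4 + 0*y^5 + 0*y^6 + 0*y^7 + 0*y^8 : ℝ)
        = 3*t3 + 2*y^3 + 6*y*t2 := by ring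
    rw [this]; exact hy
  rw [e]
  have H := (hasDerivAt_poly8 (6*t2) 0 6 0 0 0 0 0 0 y).div
    (hasDerivAt_poly8 (3*t3) (6*t2) 0 2 0 0 0 0 0 y) hy'
  refine H.congr_deriv (Eq.symm ?_)
  unfold g1fun
  rw [div_eq_div_iff (pow_ne_zero 2 hy) (pow_ne_zero 2 hy')]
  ring

/-- `∂³u₁/∂x³`. -/
noncomputable def g3fun (t2 t3 y : ℝ) : ℝ :=
  (-2592*t2*t3^2 - 7776*t2^4 + 5184*y*t2^2*t3 - 6480*y^2*t3^2 - 10368*y^2*t2^3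
    + 1728*y^3*t2*t3 - 6912*y^4*t2^2 + 6912*y^5*t3 + 2304*y^6*t2 - 288*y^8)
    / (3*t3 + 2*y^3 + 6*y*t2)^4

/-- `∂u₂/∂x`. -/
noncomputable def w1fun (t2 t3 y : ℝ) : ℝ :=
  (54*t3^2 + 324*t2^3 - 216*y*t2*t3 + 324*y^2*t2^2 - 360*y^3*t3 - 36*y^4*t2 + 60*y^6)
    / (3*t3 + 2*y^3 + 6*y*t2)^3

lemma step_g1x (t2 t3 y : ℝ) (hy : 3*t3 + 2*y^3 + 6*y*t2 ≠ 0) :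
    HasDerivAt (g1fun t2 t3) (g2fun t2 t3 y) y := by
  have e : g1fun t2 t3
      = fun z : ℝ => ((-36*t2^2) + (36*t3)*z^1 + 0*z^2 + 0*z^3 + (-12)*z^4 + 0*z^5 + 0*z^6 + 0*z^7 + 0*z^8)
        / ((3*t3) + (6*t2)*z^1 + 0*z^2 + 2*z^3 + 0*z^4 + 0*z^5 + 0*z^6 + 0*z^7 + 0*z^8)^2 := by
    funext z; unfold g1fun; ring
  have hy' : ((3*t3) + (6*t2)*y^1 + 0*y^2 + 2*y^3 + 0*y^4 + 0*y^5 + 0*y^6 + 0*y^7 + 0*y^8 : ℝ) ≠ 0 := by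
    have : ((3*t3) + (6*t2)*y^1 + 0*y^2 + 2*y^3 + 0*y^4 + 0*y^5 + 0*y^6 + 0*y^7 + 0*y^8 : ℝ)
        = 3*t3 + 2*y^3 + 6*y*t2 := by ring
    rw [this]; exact hy
  rw [e]
  have H := (hasDerivAt_poly8 (-36*t2^2) (36*t3) 0 0 (-12) 0 0 0 0 y).div
    ((hasDerivAt_poly8 (3*t3) (6*t2) 0 2 0 0 0 0 0 y).pow 2) (pow_ne_zero 2 hy')
  refine H.congr_deriv (Eq.symm ?_)
  unfold g2fun
  simp only [Pi.pow_apply]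
  rw [div_eq_div_iff (pow_ne_zero 3 hy) (pow_ne_zero 2 (pow_ne_zero 2 hy'))]
  push_cast
  ring

lemma step_g2x (t2 t3 y : ℝ) (hy : 3*t3 + 2*y^3 + 6*y*t2 ≠ 0) :
    HasDerivAt (g2fun t2 t3) (g3fun t2 t3 y) y := by
  have e : g2fun t2 t3
      = fun z : ℝ => ((108*t3^2 + 432*t2^3) + (-216*t2*t3)*z^1 + (432*t2^2)*z^2 + (-504*t3)*z^3
          + (-144*t2)*z^4 + 0*z^5 + 48*z^6 + 0*z^7 + 0*z^8)
        / ((3*t3) + (6*t2)*z^1 + 0*z^2 + 2*z^3 + 0*z^4 + 0*z^5 + 0*z^6 + 0*z^7 + 0*z^8)^3 := by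
    funext z; unfold g2fun; ring
  have hy' : ((3*t3) + (6*t2)*y^1 + 0*y^2 + 2*y^3 + 0*y^4 + 0*y^5 + 0*y^6 + 0*y^7 + 0*y^8 : ℝ) ≠ 0 := by
    have : ((3*t3) + (6*t2)*y^1 + 0*y^2 + 2*y^3 + 0*y^4 + 0*y^5 + 0*y^6 + 0*y^7 + 0*y^8 : ℝ)
        = 3*t3 + 2*y^3 + 6*y*t2 := by ring
    rw [this]; exact hy
  rw [e]
  have H := (hasDerivAt_poly8 (108*t3^2 + 432*t2^3) (-216*t2*t3) (432*t2^2) (-504*t3)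
      (-144*t2) 0 48 0 0 y).div
    ((hasDerivAt_poly8 (3*t3) (6*t2) 0 2 0 0 0 0 0 y).pow 3) (pow_ne_zero 3 hy')
  refine H.congr_deriv (Eq.symm ?_)
  unfold g3fun
  simp only [Pi.pow_apply]
  rw [div_eq_div_iff (pow_ne_zero 4 hy) (pow_ne_zero 2 (pow_ne_zero 3 hy'))]
  push_cast
  ring

lemma step_u2x (t2 t3 y : ℝ) (hy : 3*t3 + 2*y^3 + 6*y*t2 ≠ 0) :
    HasDerivAt (fun z => u2sol z t2 t3) (w1fun t2 t3 y) y := by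
  have e : (fun z => u2sol z t2 t3)
      = fun z : ℝ => ((-27*t2^2) + (18*t3)*z^1 + (-18*t2)*z^2 + 0*z^3 + (-15)*z^4 + 0*z^5 + 0*z^6 + 0*z^7 + 0*z^8)
        / ((3*t3) + (6*t2)*z^1 + 0*z^2 + 2*z^3 + 0*z^4 + 0*z^5 + 0*z^6 + 0*z^7 + 0*z^8)^2 := by
    funext z; unfold u2sol; ring
  have hy' : ((3*t3) + (6*t2)*y^1 + 0*y^2 + 2*y^3 + 0*y^4 + 0*y^5 + 0*y^6 + 0*y^7 + 0*y^8 : ℝ) ≠ 0 := by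
    have : ((3*t3) + (6*t2)*y^1 + 0*y^2 + 2*y^3 + 0*y^4 + 0*y^5 + 0*y^6 + 0*y^7 + 0*y^8 : ℝ)
        = 3*t3 + 2*y^3 + 6*y*t2 := by ring
    rw [this]; exact hy
  rw [e]
  have H := (hasDerivAt_poly8 (-27*t2^2) (18*t3) (-18*t2) 0 (-15) 0 0 0 0 y).div
    ((hasDerivAt_poly8 (3*t3) (6*t2) 0 2 0 0 0 0 0 y).pow 2) (pow_ne_zero 2 hy')
  refine H.congr_deriv (Eq.symm ?_)
  unfold w1fun
  simp only [Pi.pow_apply]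
  rw [div_eq_div_iff (pow_ne_zero 3 hy) (pow_ne_zero 2 (pow_ne_zero 2 hy'))]
  push_cast
  ring

lemma step_u1t (x t2 t3 : ℝ) (hx : 3*t3 + 2*x^3 + 6*x*t2 ≠ 0) :
    HasDerivAt (fun s => u1sol x s t3)
      ((18*t3 - 24*x^3) / (3*t3 + 2*x^3 + 6*x*t2)^2) t2 := by
  have e : (fun s => u1sol x s t3)
      = fun s : ℝ => ((6*x^2) + 6*s^1 + 0*s^2 + 0*s^3 + 0*s^4 + 0*s^5 + 0*s^6 + 0*s^7 + 0*s^8)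
        / ((3*t3 + 2*x^3) + (6*x)*s^1 + 0*s^2 + 0*s^3 + 0*s^4 + 0*s^5 + 0*s^6 + 0*s^7 + 0*s^8) := by
    funext s; unfold u1sol; ring
  have hy' : ((3*t3 + 2*x^3) + (6*x)*t2^1 + 0*t2^2 + 0*t2^3 + 0*t2^4 + 0*t2^5 + 0*t2^6 + 0*t2^7 + 0*t2^8 : ℝ) ≠ 0 := by
    have : ((3*t3 + 2*x^3) + (6*x)*t2^1 + 0*t2^2 + 0*t2^3 + 0*t2^4 + 0*t2^5 + 0*t2^6 + 0*t2^7 + 0*t2^8 : ℝ)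
        = 3*t3 + 2*x^3 + 6*x*t2 := by ring
    rw [this]; exact hx
  rw [e]
  have H := (hasDerivAt_poly8 (6*x^2) 6 0 0 0 0 0 0 0 t2).div
    (hasDerivAt_poly8 (3*t3 + 2*x^3) (6*x) 0 0 0 0 0 0 0 t2) hy'
  refine H.congr_deriv (Eq.symm ?_)
  rw [div_eq_div_iff (pow_ne_zero 2 hx) (pow_ne_zero 2 hy')]
  ring

lemma step_u2t (x t2 t3 : ℝ) (hx : 3*t3 + 2*x^3 + 6*x*t2 ≠ 0) :
    HasDerivAt (fun s => u2sol x s t3)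
      ((-162*t2*t3 - 270*x^2*t3 + 144*x^5) / (3*t3 + 2*x^3 + 6*x*t2)^3) t2 := by
  have e : (fun s => u2sol x s t3)
      = fun s : ℝ => ((18*x*t3 - 15*x^4) + (-18*x^2)*s^1 + (-27)*s^2 + 0*s^3 + 0*s^4 + 0*s^5 + 0*s^6 + 0*s^7 + 0*s^8)
        / ((3*t3 + 2*x^3) + (6*x)*s^1 + 0*s^2 + 0*s^3 + 0*s^4 + 0*s^5 + 0*s^6 + 0*s^7 + 0*s^8)^2 := by
    funext s; unfold u2sol; ring
  have hy' : ((3*t3 + 2*x^3) + (6*x)*t2^1 + 0*t2^2 + 0*t2^3 + 0*t2^4 + 0*t2^5 + 0*t2^6 + 0*t2^7 + 0*t2^8 : ℝ) ≠ 0 := by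
    have : ((3*t3 + 2*x^3) + (6*x)*t2^1 + 0*t2^2 + 0*t2^3 + 0*t2^4 + 0*t2^5 + 0*t2^6 + 0*t2^7 + 0*t2^8 : ℝ)
        = 3*t3 + 2*x^3 + 6*x*t2 := by ring
    rw [this]; exact hx
  rw [e]
  have H := (hasDerivAt_poly8 (18*x*t3 - 15*x^4) (-18*x^2) (-27) 0 0 0 0 0 0 t2).div
    ((hasDerivAt_poly8 (3*t3 + 2*x^3) (6*x) 0 0 0 0 0 0 0 t2).pow 2) (pow_ne_zero 2 hy')
  refine H.congr_deriv (Eq.symm ?_)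
  simp only [Pi.pow_apply]
  rw [div_eq_div_iff (pow_ne_zero 3 hx) (pow_ne_zero 2 (pow_ne_zero 2 hy'))]
  push_cast
  ring

/-- On the set where `3t₃ + 2x³ + 6xt₂ ≠ 0`, `(u₁,u₂)` satisfies the Antonowicz–Fordy
form of the second flow of the two-component cKdV hierarchy:
`u_{1,t₂} = u_{2,x} + (3/2)u₁u_{1,x}` and
`u_{2,t₂} = u₂u_{1,x} + (1/2)u₁u_{2,x} + (1/4)u_{1,xxx}`. -/
theorem rational_solution_antonowicz_fordy :
    ∀ x t2 t3 : ℝ, 3 * t3 + 2 * x ^ 3 + 6 * x * t2 ≠ 0 →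
      (deriv (fun s => u1sol x s t3) t2
        = deriv (fun y => u2sol y t2 t3) x
          + (3 / 2) * u1sol x t2 t3 * deriv (fun y => u1sol y t2 t3) x)
      ∧ (deriv (fun s => u2sol x s t3) t2
        = u2sol x t2 t3 * deriv (fun y => u1sol y t2 t3) x
          + (1 / 2) * u1sol x t2 t3 * deriv (fun y => u2sol y t2 t3) x
          + (1 / 4) * iteratedDeriv 3 (fun y => u1sol y t2 t3) x) := by
  intro x t2 t3 hne
  have hd1 : deriv (fun y => u1sol y t2 t3) x = g1fun t2 t3 x := (step_u1x t2 t3 x hne).deriv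
  have hd2 : deriv (fun y => u2sol y t2 t3) x = w1fun t2 t3 x := (step_u2x t2 t3 x hne).deriv
  have ht1 := (step_u1t x t2 t3 hne).deriv
  have ht2 := (step_u2t x t2 t3 hne).deriv
  -- third x-derivative of u₁
  have hopen : IsOpen {y : ℝ | 3*t3 + 2*y^3 + 6*y*t2 ≠ 0} := by
    have hc : Continuous fun y : ℝ => 3*t3 + 2*y^3 + 6*y*t2 := by continuity
    exact isOpen_ne_fun hc continuous_const
  have hev : ∀ᶠ y in nhds x, 3*t3 + 2*y^3 + 6*y*t2 ≠ 0 :=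
    Filter.eventually_iff.mpr (hopen.mem_nhds hne)
  have e1 : deriv (fun y => u1sol y t2 t3) =ᶠ[nhds x] g1fun t2 t3 :=
    hev.mono fun y hy => (step_u1x t2 t3 y hy).deriv
  have e2 : deriv (deriv (fun y => u1sol y t2 t3)) =ᶠ[nhds x] g2fun t2 t3 :=
    e1.deriv.trans (hev.mono fun y hy => (step_g1x t2 t3 y hy).deriv)
  have h3 : deriv (deriv (deriv (fun y => u1sol y t2 t3))) x = g3fun t2 t3 x :=
    e2.deriv_eq.trans (step_g2x t2 t3 x hne).deriv
  have hiter : iteratedDeriv 3 (fun y => u1sol y t2 t3) x = g3fun t2 t3 x := by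
    rw [show (3:ℕ) = 2+1 from rfl, iteratedDeriv_succ, show (2:ℕ) = 1+1 from rfl,
      iteratedDeriv_succ, iteratedDeriv_one]
    exact h3
  rw [hd1, hd2, ht1, ht2, hiter]
  have hne' : t3 * 3 + x ^ 3 * 2 + x * 6 * t2 ≠ 0 := by convert hne using 1; ring
  constructor
  · unfold u1sol w1fun g1fun
    field_simp
    ring
  · unfold u1sol u2sol w1fun g1fun g3fun
    have hne'' : t3 * 3 + x ^ 3 * 2 + t2 * x * 6 ≠ 0 := by convert hne using 1; ring
    field_simp
    ring
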